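/- (Inversion of non-commutative power series via plane rooted trees.) Let V be a complex vector space and φ : V → V a non-commutative power series with φ₁ = id_V. Then φ is invertible, the inverse φ⁻¹ satisfies (φ⁻¹)₁ = id_V, and for every n > 1, (φ⁻¹)_n(v₁,…,v_n) = Σ_T (−1)^{|V(T)|}·φ_T(v₁,…,v_n), where the sum is over all plane rooted trees T with n leaves all of whose internal vertices have at least two children (equivalently, valency ≥ 3), and |V(T)| denotes the number of internal vertices of T. -/

import Mathlib

/-- A non-commutative power series `U → V`: a sequence of `n`-multilinear maps `Uⁿ → V`
for `n ≥ 1` (the `n = 0` component is irrelevant). -/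
def NCSeries (U V : Type*) [AddCommGroup U] [Module ℂ U] [AddCommGroup V] [Module ℂ V] :=
  ∀ n : ℕ, MultilinearMap ℂ (fun _ : Fin n => U) V

/-- The `n`-th component of the composition `ψ ∘ φ` of non-commutative power series,
as a function: `(ψ∘φ)_n(u₁,…,u_n) = Σ_{0=i₀<⋯<i_k=n} ψ_k(φ_{i₁-i₀}(u₁,…), …)`. -/
noncomputable def ncComp {U V W : Type*} [AddCommGroup U] [Module ℂ U]
    [AddCommGroup V] [Module ℂ V] [AddCommGroup W] [Module ℂ W]
    (ψ : NCSeries V W) (φ : NCSeries U V) (n : ℕ) (v : Fin n → U) : W :=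
  ∑ c : Composition n,
    ψ c.length (fun j => φ (c.blocksFun j) (v ∘ c.embedding j))

/-- The components of the identity non-commutative power series, as functions:
`(id)₁ = id` and `(id)_n = 0` for `n ≠ 1`. -/
def ncIdFun (V : Type*) [AddCommGroup V] [Module ℂ V] : ∀ n : ℕ, (Fin n → V) → V
  | 1, v => v 0
  | _, _ => 0

/-- `ψ` is a two-sided compositional inverse of `φ`. -/
def NCInverse {U V : Type*} [AddCommGroup U] [Module ℂ U] [AddCommGroup V] [Module ℂ V]
    (φ : NCSeries U V) (ψ : NCSeries V U) : Prop :=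
  (∀ n : ℕ, 1 ≤ n → ∀ v : Fin n → U, ncComp ψ φ n v = ncIdFun U n v) ∧
  (∀ n : ℕ, 1 ≤ n → ∀ v : Fin n → V, ncComp φ ψ n v = ncIdFun V n v)

set_option linter.unusedSectionVars false

section NC

variable {U V W X : Type*} [AddCommGroup U] [Module ℂ U] [AddCommGroup V] [Module ℂ V]
  [AddCommGroup W] [Module ℂ W] [AddCommGroup X] [Module ℂ X]

theorem nc_congr (φ : NCSeries U V) {m n : ℕ} (h : m = n) {v : Fin m → U} {w : Fin n → U}
    (hv : ∀ i (him : i < m) (hin : i < n), v ⟨i, him⟩ = w ⟨i, hin⟩) : φ m v = φ n w := by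
  subst h
  exact congrArg _ (funext fun i => hv i.1 i.2 i.2)

theorem apply_update {n : ℕ} (c : Composition n)
    (f : ∀ j : Fin c.length, MultilinearMap ℂ (fun _ : Fin (c.blocksFun j) => U) V)
    (j : Fin n) (v : Fin n → U) (z : U) :
    (fun k => f k (Function.update v j z ∘ c.embedding k)) =
      Function.update (fun k => f k (v ∘ c.embedding k)) (c.index j)
        (f (c.index j) (Function.update (v ∘ c.embedding (c.index j)) (c.invEmbedding j) z)) := by
  ext k
  by_cases h : k = c.index j
  · rw [h]
    let r : Fin (c.blocksFun (c.index j)) → Fin n := c.embedding (c.index j)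
    simp only [Function.update_self]
    change f (c.index j) (Function.update v j z ∘ r) = _
    let j' := c.invEmbedding j
    suffices B : Function.update v j z ∘ r = Function.update (v ∘ r) j' z by rw [B]
    suffices C : Function.update v (r j') z ∘ r = Function.update (v ∘ r) j' z by
      convert C; exact (c.embedding_comp_inv j).symm
    exact Function.update_comp_eq_of_injective _ (c.embedding _).injective _ _
  · simp only [h, Function.update_eq_self, Function.update_of_ne, Ne, not_false_iff]
    let r : Fin (c.blocksFun k) → Fin n := c.embedding k
    change f k (Function.update v j z ∘ r) = f k (v ∘ r)
    suffices B : Function.update v j z ∘ r = v ∘ r by rw [B]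
    apply Function.update_comp_eq_of_notMem_range
    rwa [c.mem_range_embedding_iff']

/-- Composing an outer series with a family of multilinear maps along a composition. -/
noncomputable def compAlongF (ψ : NCSeries V W) {n : ℕ} (c : Composition n)
    (f : ∀ j : Fin c.length, MultilinearMap ℂ (fun _ : Fin (c.blocksFun j) => U) V) :
    MultilinearMap ℂ (fun _ : Fin n => U) W where
  toFun v := ψ c.length fun k => f k (v ∘ c.embedding k)
  map_update_add' v i x y := by
    cases Subsingleton.elim ‹_› (instDecidableEqFin _)
    simp only [apply_update, MultilinearMap.map_update_add]
  map_update_smul' v i r x := by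
    cases Subsingleton.elim ‹_› (instDecidableEqFin _)
    simp only [apply_update, MultilinearMap.map_update_smul]

theorem blocksFun_lt {n : ℕ} (c : Composition n) (hc : 1 < c.length) (j : Fin c.length) :
    c.blocksFun j < n := by
  have h := c.sum_blocksFun
  haveI : Nontrivial (Fin c.length) := Fin.nontrivial_iff_two_le.mpr hc
  obtain ⟨k, hk⟩ := exists_ne j
  calc c.blocksFun j < c.blocksFun j + c.blocksFun k :=
        Nat.lt_add_of_pos_right (c.one_le_blocksFun k)
    _ ≤ ∑ i, c.blocksFun i := by
        rw [← Finset.sum_pair (Ne.symm hk)]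
        exact Finset.sum_le_sum_of_subset (Finset.subset_univ _)
    _ = n := h

noncomputable def ncInv (φ : NCSeries V V) : ∀ n : ℕ, MultilinearMap ℂ (fun _ : Fin n => V) V
  | 0 => 0
  | 1 => MultilinearMap.ofSubsingleton ℂ V V 0 LinearMap.id
  | (n+2) => - ∑ c : {c : Composition (n+2) // 1 < c.length},
      compAlongF φ c.1 fun j => ncInv φ (c.1.blocksFun j)
  termination_by n => n
  decreasing_by exact blocksFun_lt c.1 c.2 j

end NC

section NC2
variable {U V W X : Type*} [AddCommGroup U] [Module ℂ U] [AddCommGroup V] [Module ℂ V]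
  [AddCommGroup W] [Module ℂ W] [AddCommGroup X] [Module ℂ X]

theorem nc_assoc (θ : NCSeries W X) (ψ : NCSeries V W) (φ : NCSeries U V) (n : ℕ)
    (v : Fin n → U) :
    ∑ c : Composition n, ncComp θ ψ c.length (fun j => φ (c.blocksFun j) (v ∘ c.embedding j))
      = ∑ c : Composition n,
          θ c.length (fun i => ncComp ψ φ (c.blocksFun i) (v ∘ c.embedding i)) := by
  let f : (Σ a : Composition n, Composition a.length) → X := fun p =>
    θ p.2.length fun i => ψ (p.2.blocksFun i)
      ((fun j => φ (p.1.blocksFun j) (v ∘ p.1.embedding j)) ∘ p.2.embedding i)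
  let g : (Σ c : Composition n, ∀ i : Fin c.length, Composition (c.blocksFun i)) → X := fun p =>
    θ p.1.length fun i =>
      ψ (p.2 i).length fun j =>
        φ ((p.2 i).blocksFun j) ((v ∘ p.1.embedding i) ∘ (p.2 i).embedding j)
  have hL : (∑ c : Composition n,
      ncComp θ ψ c.length (fun j => φ (c.blocksFun j) (v ∘ c.embedding j))) = ∑ p, f p := by
    simp only [ncComp]
    rw [Finset.sum_sigma', Finset.univ_sigma_univ]
  have hR : (∑ c : Composition n,
      θ c.length (fun i => ncComp ψ φ (c.blocksFun i) (v ∘ c.embedding i))) = ∑ p, g p := by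
    have step : ∀ c : Composition n,
        θ c.length (fun i => ncComp ψ φ (c.blocksFun i) (v ∘ c.embedding i))
          = ∑ r : ∀ i : Fin c.length, Composition (c.blocksFun i), g ⟨c, r⟩ := by
      intro c
      exact MultilinearMap.map_sum (θ c.length)
        (fun i (d : Composition (c.blocksFun i)) => ψ d.length fun j => φ (d.blocksFun j) ((v ∘ c.embedding i) ∘ d.embedding j))
    rw [Finset.sum_congr rfl fun c _ => step c, Finset.sum_sigma', Finset.univ_sigma_univ]
  rw [hL, hR, ← (Composition.sigmaEquivSigmaPi n).sum_comp g]
  apply Finset.sum_congr rfl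
  rintro ⟨a, b⟩ _
  dsimp only [f, g, Composition.sigmaEquivSigmaPi, Equiv.coe_fn_mk]
  apply nc_congr θ (Composition.length_gather a b).symm
  intro i hi1 hi2
  apply nc_congr ψ (Composition.length_sigmaCompositionAux a b _).symm
  intro j hj1 hj2
  apply nc_congr φ (Composition.blocksFun_sigmaCompositionAux a b _ _).symm
  intro k hk1 hk2
  refine congrArg v (Fin.ext ?_)
  simp only [Composition.coe_embedding]
  rw [Composition.sizeUpTo_sizeUpTo_add _ _ hi1 hj1, add_assoc]

end NC2

section NC3
variable {U V : Type*} [AddCommGroup U] [Module ℂ U] [AddCommGroup V] [Module ℂ V]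

theorem fn_congr (F : ∀ n : ℕ, (Fin n → U) → V) {m n : ℕ} (h : m = n) {v : Fin m → U}
    {w : Fin n → U} (hv : ∀ i (him : i < m) (hin : i < n), v ⟨i, him⟩ = w ⟨i, hin⟩) :
    F m v = F n w := by
  subst h
  exact congrArg _ (funext fun i => hv i.1 i.2 i.2)

theorem ncIdFun_one {k : ℕ} (h : k = 1) (w : Fin k → V) :
    ncIdFun V k w = w ⟨0, h ▸ Nat.zero_lt_one⟩ := by subst h; rfl

theorem ncIdFun_ne_one {k : ℕ} (h : k ≠ 1) (w : Fin k → V) : ncIdFun V k w = 0 := by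
  match k, h with
  | 0, _ => rfl
  | 1, h => exact absurd rfl h
  | (k+2), _ => rfl

theorem comp_unique (c : Composition 1) : c = Composition.single 1 Nat.one_pos :=
  (Composition.eq_single_iff_length Nat.one_pos).2
    (le_antisymm c.length_le (c.length_pos_of_pos Nat.one_pos))

theorem apply_single (F : ∀ n : ℕ, (Fin n → U) → V) {n : ℕ} (hn : 0 < n) (v : Fin n → U)
    (j : Fin (Composition.single n hn).length) :
    F ((Composition.single n hn).blocksFun j) (v ∘ (Composition.single n hn).embedding j)
      = F n v := by
  refine fn_congr F (by simp) fun i hi1 hi2 => ?_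
  dsimp only [Function.comp_apply]
  congr 1
  convert Composition.single_embedding hn ⟨i, hi2⟩ using 1
  cases' j with j_val j_property
  have : j_val = 0 := le_bot_iff.1 (Nat.lt_succ_iff.1 (by simpa using j_property))
  subst this
  ext
  rw [Composition.coe_embedding]
  simp

theorem apply_ones (F : ∀ n : ℕ, (Fin n → V) → V) (hF1 : ∀ w : Fin 1 → V, F 1 w = w 0)
    {n : ℕ} (v : Fin n → V) (i : Fin (Composition.ones n).length) :
    F ((Composition.ones n).blocksFun i) (v ∘ (Composition.ones n).embedding i)
      = v (Fin.castLE (Composition.length_le _) i) := by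
  rw [show F ((Composition.ones n).blocksFun i) (v ∘ (Composition.ones n).embedding i)
      = F 1 fun _ => v (Fin.castLE (Composition.length_le _) i) from ?_, hF1]
  apply fn_congr F (Composition.ones_blocksFun _ _)
  intro j hjn hj1
  obtain rfl : j = 0 := by omega
  refine congr_arg v ?_
  rw [Fin.ext_iff, Fin.coe_castLE, Composition.ones_embedding, Fin.val_mk]

/-- If `F` coincides with the identity series, then `Σ_c F_{|c|}(χ blocks) = χ_n`. -/
theorem outer_id {n : ℕ} (hn : 0 < n) (F : ∀ k, (Fin k → V) → V)
    (hid : ∀ k, 0 < k → ∀ w, F k w = ncIdFun V k w)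
    (χ : NCSeries V V) (v : Fin n → V) :
    ∑ c : Composition n, F c.length (fun j => χ (c.blocksFun j) (v ∘ c.embedding j))
      = χ n v := by
  rw [Finset.sum_eq_single (Composition.single n hn)]
  · have h1 : (Composition.single n hn).length = 1 := Composition.single_length hn
    rw [hid _ (h1 ▸ Nat.one_pos), ncIdFun_one h1]
    exact apply_single (fun k w => χ k w) hn v _
  · intro c _ hc
    have h1 : c.length ≠ 1 := fun h => hc ((Composition.eq_single_iff_length hn).2 h)
    rw [hid _ (c.length_pos_of_pos hn), ncIdFun_ne_one h1]
  · intro h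
    exact absurd (Finset.mem_univ _) h

/-- If `G` coincides with the identity series, then `Σ_c θ_{|c|}(G blocks) = θ_n`. -/
theorem inner_id {n : ℕ} (hn : 0 < n) (θ : NCSeries V V) (G : ∀ k, (Fin k → V) → V)
    (hid : ∀ k, 0 < k → ∀ w, G k w = ncIdFun V k w) (v : Fin n → V) :
    ∑ c : Composition n, θ c.length (fun i => G (c.blocksFun i) (v ∘ c.embedding i))
      = θ n v := by
  have hG1 : ∀ w : Fin 1 → V, G 1 w = w 0 := fun w => by
    rw [hid 1 Nat.one_pos, ncIdFun_one rfl]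
    rfl
  rw [Finset.sum_eq_single (Composition.ones n)]
  · rw [show (fun i => G ((Composition.ones n).blocksFun i)
        (v ∘ (Composition.ones n).embedding i))
        = fun i => v (Fin.castLE (Composition.length_le _) i) from
      funext fun i => apply_ones G hG1 v i]
    exact nc_congr θ (Composition.ones_length n) fun i hi1 hi2 => rfl
  · intro c _ hc
    obtain ⟨k, hk, h1k⟩ := Composition.ne_ones_iff.1 hc
    obtain ⟨idx, hidx, hget⟩ := List.mem_iff_getElem.1 hk
    have hblock : c.blocksFun ⟨idx, hidx⟩ ≠ 1 := by
      simp only [Composition.blocksFun, List.get_eq_getElem, hget]; omega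
    refine MultilinearMap.map_coord_zero _ ⟨idx, hidx⟩ ?_
    rw [hid _ (by have := c.one_le_blocksFun ⟨idx, hidx⟩; omega), ncIdFun_ne_one hblock]
  · intro h
    exact absurd (Finset.mem_univ _) h

end NC3

section NC4
variable {V : Type*} [AddCommGroup V] [Module ℂ V]

theorem ncInv_one (φ : NCSeries V V) (v : Fin 1 → V) : ncInv φ 1 v = v 0 := by
  rw [ncInv]
  rfl

theorem comp_ncInv (φ : NCSeries V V) (hφ1 : ∀ v : Fin 1 → V, φ 1 v = v 0) :
    ∀ n, 0 < n → ∀ v : Fin n → V, ncComp φ (ncInv φ) n v = ncIdFun V n v := by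
  intro n hn v
  have hsingle : ∀ (hn' : 0 < n),
      φ (Composition.single n hn').length
        (fun j => ncInv φ ((Composition.single n hn').blocksFun j)
          (v ∘ (Composition.single n hn').embedding j)) = ncInv φ n v := by
    intro hn'
    rw [show (fun j => ncInv φ ((Composition.single n hn').blocksFun j)
          (v ∘ (Composition.single n hn').embedding j))
        = fun _ : Fin (Composition.single n hn').length => ncInv φ n v from
      funext fun j => apply_single (fun k w => ncInv φ k w) hn' v j]
    rw [nc_congr φ (Composition.single_length hn') (w := fun _ : Fin 1 => ncInv φ n v)
      (fun i hi1 hi2 => rfl), hφ1]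
  match n, hn with
  | 1, _ =>
    have huniv : (Finset.univ : Finset (Composition 1))
        = {Composition.single 1 Nat.one_pos} :=
      (Finset.eq_singleton_iff_unique_mem.2
        ⟨Finset.mem_univ _, fun c _ => comp_unique c⟩).symm ▸ rfl
    unfold ncComp
    rw [huniv, Finset.sum_singleton, hsingle Nat.one_pos, ncInv_one]
    rfl
  | (m+2), _ =>
    have key : ncInv φ (m+2) = - ∑ c : {c : Composition (m+2) // 1 < c.length},
        compAlongF φ c.1 fun j => ncInv φ (c.1.blocksFun j) := by rw [ncInv]
    have hpos : (0:ℕ) < m+2 := by omega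
    unfold ncComp
    rw [← Finset.sum_filter_add_sum_filter_not Finset.univ
        (fun c : Composition (m+2) => c.length = 1)]
    have hone : Finset.univ.filter (fun c : Composition (m+2) => c.length = 1)
        = {Composition.single (m+2) hpos} := by
      ext c
      simp [Composition.eq_single_iff_length hpos]
    have htwo : ∀ c : Composition (m+2), c ∈ Finset.univ.filter
        (fun c : Composition (m+2) => ¬ c.length = 1) ↔ 1 < c.length := by
      intro c
      have := c.length_pos_of_pos hpos
      simp only [Finset.mem_filter, Finset.mem_univ, true_and]
      omega
    rw [hone, Finset.sum_singleton, hsingle hpos,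
      Finset.sum_subtype _ htwo
        (fun c : Composition (m+2) => φ c.length
          (fun j => ncInv φ (c.blocksFun j) (v ∘ c.embedding j)))]
    have : ∑ c : {c : Composition (m+2) // 1 < c.length},
        φ c.1.length (fun j => ncInv φ (c.1.blocksFun j) (v ∘ c.1.embedding j))
        = (∑ c : {c : Composition (m+2) // 1 < c.length},
            compAlongF φ c.1 fun j => ncInv φ (c.1.blocksFun j)) v := by
      rw [MultilinearMap.sum_apply]
      rfl
    rw [this, ← neg_neg (∑ c : {c : Composition (m+2) // 1 < c.length},
        compAlongF φ c.1 fun j => ncInv φ (c.1.blocksFun j)), ← key]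
    simp only [MultilinearMap.neg_apply, add_neg_cancel]
    rfl

theorem ncComp_congr_inner (ψ φ φ' : NCSeries V V)
    (h : ∀ k, 0 < k → ∀ w : Fin k → V, φ k w = φ' k w) (n : ℕ) (v : Fin n → V) :
    ncComp ψ φ n v = ncComp ψ φ' n v := by
  rw [ncComp, ncComp]
  refine Finset.sum_congr rfl fun c _ => ?_
  congr 1
  funext j
  exact h _ (c.one_le_blocksFun j) _

theorem leftInv_eq_rightInv (φ ψ χ : NCSeries V V)
    (hL : ∀ n, 0 < n → ∀ v : Fin n → V, ncComp ψ φ n v = ncIdFun V n v)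
    (hR : ∀ n, 0 < n → ∀ v : Fin n → V, ncComp φ χ n v = ncIdFun V n v) :
    ∀ n, 0 < n → ∀ v : Fin n → V, χ n v = ψ n v := by
  intro n hn v
  have h := nc_assoc ψ φ χ n v
  rw [outer_id hn (fun k w => ncComp ψ φ k w) (fun k hk w => hL k hk w) χ v] at h
  rw [inner_id hn ψ (fun k w => ncComp φ χ k w) (fun k hk w => hR k hk w) v] at h
  exact h

theorem ncInv_inverse (φ : NCSeries V V) (hφ1 : ∀ v : Fin 1 → V, φ 1 v = v 0) :
    NCInverse φ (ncInv φ) := by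
  have hR := comp_ncInv φ hφ1
  have hRR := comp_ncInv (ncInv φ) (ncInv_one φ)
  have hχ : ∀ k, 0 < k → ∀ w : Fin k → V, ncInv (ncInv φ) k w = φ k w :=
    leftInv_eq_rightInv (ncInv φ) φ (ncInv (ncInv φ)) hR hRR
  constructor
  · intro n hn v
    calc ncComp (ncInv φ) φ n v = ncComp (ncInv φ) (ncInv (ncInv φ)) n v :=
          (ncComp_congr_inner _ _ _ hχ n v).symm
      _ = ncIdFun V n v := hRR n hn v
  · exact fun n hn v => hR n hn v

theorem inverse_unique (φ ψ : NCSeries V V) (hφ1 : ∀ v : Fin 1 → V, φ 1 v = v 0)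
    (h : NCInverse φ ψ) : ∀ n, 0 < n → ∀ v : Fin n → V, ψ n v = ncInv φ n v :=
  fun n hn v => (leftInv_eq_rightInv φ ψ (ncInv φ) h.1 (comp_ncInv φ hφ1) n hn v).symm

end NC4


/-- A plane rooted tree: either a leaf or an internal node with an ordered list of
subtrees. -/
inductive PTree : Type
  | leaf : PTree
  | node : List PTree → PTree

namespace PTree

mutual
/-- The number of leaves of a plane rooted tree. -/
def leaves : PTree → ℕ
  | .leaf => 1
  | .node ts => leavesList ts

/-- The total number of leaves of a list of plane rooted trees. -/
def leavesList : List PTree → ℕ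
  | [] => 0
  | t :: ts => leaves t + leavesList ts
end

mutual
/-- The number of internal vertices of a plane rooted tree. -/
def internalVertices : PTree → ℕ
  | .leaf => 0
  | .node ts => 1 + internalVerticesList ts

/-- The total number of internal vertices of a list of plane rooted trees. -/
def internalVerticesList : List PTree → ℕ
  | [] => 0
  | t :: ts => internalVertices t + internalVerticesList ts
end

/-- A plane rooted tree is good if every internal vertex has at least two children
(valency `≥ 3`). -/
inductive Good : PTree → Prop
  | leaf : Good .leaf
  | node (ts : List PTree) (hlen : 2 ≤ ts.length) (h : ∀ t ∈ ts, Good t) : Good (.node ts)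

end PTree

mutual
/-- `applyTree φ T l` composes the components of the non-commutative power series `φ`
according to the shape of the plane rooted tree `T`, feeding in the entries of the list
`l` at the leaves (in their canonical left-to-right order). -/
noncomputable def applyTree {V : Type*} [AddCommGroup V] [Module ℂ V]
    (φ : NCSeries V V) : PTree → List V → V
  | .leaf, l => (l.head?).getD 0
  | .node ts, l => φ ts.length (fun j => (applyForest φ ts l).getD j 0)

/-- `applyForest φ ts l` applies `applyTree` to each tree in `ts`, splitting the list `l`
into consecutive blocks according to the numbers of leaves of the trees. -/
noncomputable def applyForest {V : Type*} [AddCommGroup V] [Module ℂ V]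
    (φ : NCSeries V V) : List PTree → List V → List V
  | [], _ => []
  | t :: ts, l => applyTree φ t (l.take t.leaves) :: applyForest φ ts (l.drop t.leaves)
end

namespace PTree

theorem leavesList_eq_sum_map : ∀ ts : List PTree, leavesList ts = (ts.map leaves).sum
  | [] => rfl
  | t :: ts => by rw [leavesList, List.map_cons, List.sum_cons, leavesList_eq_sum_map ts]

theorem ivList_eq_sum_map :
    ∀ ts : List PTree, internalVerticesList ts = (ts.map internalVertices).sum
  | [] => rfl
  | t :: ts => by
      rw [internalVerticesList, List.map_cons, List.sum_cons, ivList_eq_sum_map ts]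

theorem Good.one_le_leaves : ∀ {T : PTree}, Good T → 1 ≤ T.leaves := by
  intro T h
  induction h with
  | leaf => exact le_refl 1
  | node ts hlen h ih =>
    show 1 ≤ leavesList ts
    match ts, hlen, h, ih with
    | t :: ts, _, h, ih =>
      have := ih t (by simp)
      rw [leavesList]
      omega

theorem length_le_leavesList :
    ∀ ts : List PTree, (∀ t ∈ ts, 1 ≤ t.leaves) → ts.length ≤ leavesList ts
  | [], _ => le_refl 0
  | t :: ts, h => by
      have h1 := h t (by simp)
      have h2 := length_le_leavesList ts (fun u hu => h u (by simp [hu]))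
      rw [leavesList]
      simp only [List.length_cons]
      omega

theorem leaves_add_le_leavesList :
    ∀ (ts : List PTree), (∀ t ∈ ts, 1 ≤ t.leaves) → ∀ t ∈ ts,
      t.leaves + (ts.length - 1) ≤ leavesList ts := by
  intro ts hts t ht
  induction ts with
  | nil => simp at ht
  | cons u ts ih =>
    rw [leavesList]
    rcases List.mem_cons.1 ht with rfl | ht'
    · have := length_le_leavesList ts (fun x hx => hts x (by simp [hx]))
      simp only [List.length_cons]
      omega
    · have h1 := hts u (by simp)
      have h2 := ih (fun x hx => hts x (by simp [hx])) ht'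
      have h3 : 1 ≤ ts.length := by
        cases ts with
        | nil => simp at ht'
        | cons a l => simp
      simp only [List.length_cons]
      omega

theorem Good.eq_leaf_of_leaves_eq_one : ∀ {T : PTree}, Good T → T.leaves = 1 → T = .leaf := by
  intro T h
  cases h with
  | leaf => intro _; rfl
  | node ts hlen h =>
    intro h1
    exfalso
    have := length_le_leavesList ts (fun t ht => (h t ht).one_le_leaves)
    have : leavesList ts = 1 := h1
    omega

end PTree

section Trees
variable {V : Type*} [AddCommGroup V] [Module ℂ V]

theorem applyForest_getD (φ : NCSeries V V) :
    ∀ (ts : List PTree) (l : List V) (j : ℕ) (hj : j < ts.length),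
      (applyForest φ ts l).getD j 0
        = applyTree φ ts[j]
            ((l.drop (PTree.leavesList (ts.take j))).take ts[j].leaves) := by
  intro ts
  induction ts with
  | nil => intro l j hj; simp at hj
  | cons t ts ih =>
    intro l j hj
    rw [applyForest]
    match j with
    | 0 => simp [PTree.leavesList]
    | (j+1) =>
      rw [List.getD_cons_succ, ih (l.drop t.leaves) j (by simpa using hj)]
      have h1 : PTree.leavesList ((t :: ts).take (j+1))
          = t.leaves + PTree.leavesList (ts.take j) := by
        rw [List.take_succ_cons, PTree.leavesList]
      rw [List.drop_drop, ← h1]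
      simp

theorem ofFn_drop_take {n : ℕ} (c : Composition n) (v : Fin n → V) (j : Fin c.length) :
    ((List.ofFn v).drop (c.sizeUpTo j)).take (c.blocksFun j)
      = List.ofFn (v ∘ c.embedding j) := by
  have hle : c.sizeUpTo j + c.blocksFun j ≤ n := by
    have h1 := c.sizeUpTo_succ' j
    have h2 := c.sizeUpTo_le ((j : ℕ) + 1)
    omega
  apply List.ext_getElem
  · simp only [List.length_take, List.length_drop, List.length_ofFn]
    omega
  · intro i h1 h2
    simp only [List.getElem_take, List.getElem_drop, List.getElem_ofFn]
    refine congrArg v (Fin.ext ?_)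
    rw [Composition.coe_embedding]

theorem finite_good : ∀ n : ℕ, {T : PTree | T.Good ∧ T.leaves = n}.Finite := by
  intro n
  induction n using Nat.strong_induction_on with
  | _ n ih =>
    classical
    set Un : Set PTree := ⋃ m ∈ Finset.range n, {T : PTree | T.Good ∧ T.leaves = m} with hU
    have hUfin : Un.Finite :=
      Set.Finite.biUnion (Finset.range n).finite_toSet fun m hm => ih m (Finset.mem_range.1 hm)
    haveI := hUfin.to_subtype
    have hlist : {l : List ↥Un | l.length ≤ n}.Finite := List.finite_length_le _ n
    refine Set.Finite.subset (Set.Finite.insert PTree.leaf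
      (Set.Finite.image (fun l : List ↥Un => PTree.node (l.map Subtype.val)) hlist)) ?_
    rintro T ⟨hg, hl⟩
    cases hg with
    | leaf => exact Set.mem_insert _ _
    | node ts hlen h =>
      refine Set.mem_insert_of_mem _ ?_
      have hpos : ∀ t ∈ ts, 1 ≤ t.leaves := fun t ht => (h t ht).one_le_leaves
      have hlv : PTree.leavesList ts = n := hl
      have hmem : ∀ t ∈ ts, t ∈ Un := by
        intro t ht
        have hlt : t.leaves < n := by
          have := PTree.leaves_add_le_leavesList ts hpos t ht
          omega
        refine Set.mem_biUnion (Finset.mem_coe.2 (Finset.mem_range.2 hlt)) ?_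
        exact ⟨h t ht, rfl⟩
      refine ⟨ts.attachWith (· ∈ Un) hmem, ?_, ?_⟩
      · show (ts.attachWith (· ∈ Un) hmem).length ≤ n
        rw [List.length_attachWith]
        have := PTree.length_le_leavesList ts hpos
        omega
      · show PTree.node (List.map Subtype.val (ts.attachWith (· ∈ Un) hmem)) = PTree.node ts
        rw [List.attachWith_map_subtype_val]

end Trees

section Trees2
variable {V : Type*} [AddCommGroup V] [Module ℂ V]

theorem blocks_eq_map_leaves {n : ℕ} (c : Composition n) (r : ∀ _ : Fin c.length, PTree)
    (hr : ∀ j, (r j).leaves = c.blocksFun j) :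
    c.blocks = (List.ofFn r).map PTree.leaves := by
  rw [List.map_ofFn, ← Composition.ofFn_blocksFun c]
  congr 1
  funext j
  exact (hr j).symm

theorem node_ofFn_iv {k : ℕ} (r : Fin k → PTree) :
    (PTree.node (List.ofFn r)).internalVertices = 1 + ∑ j, (r j).internalVertices := by
  rw [show (PTree.node (List.ofFn r)).internalVertices
      = 1 + PTree.internalVerticesList (List.ofFn r) from rfl,
    PTree.ivList_eq_sum_map, List.map_ofFn, List.sum_ofFn]
  rfl

theorem node_ofFn_apply (φ : NCSeries V V) {n : ℕ} (c : Composition n)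
    (r : ∀ _ : Fin c.length, PTree) (hr : ∀ j, (r j).leaves = c.blocksFun j) (v : Fin n → V) :
    applyTree φ (PTree.node (List.ofFn r)) (List.ofFn v)
      = φ c.length (fun j => applyTree φ (r j) (List.ofFn (v ∘ c.embedding j))) := by
  rw [applyTree]
  apply nc_congr φ (List.length_ofFn (f := r))
  intro i hi1 hi2
  rw [show ((⟨i, hi1⟩ : Fin (List.ofFn r).length) : ℕ) = i from rfl]
  rw [applyForest_getD φ (List.ofFn r) (List.ofFn v) i hi1]
  have hget : (List.ofFn r)[i] = r ⟨i, hi2⟩ := List.getElem_ofFn ..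
  rw [hget]
  have hsz : PTree.leavesList ((List.ofFn r).take i) = c.sizeUpTo i := by
    rw [PTree.leavesList_eq_sum_map, List.map_take, ← blocks_eq_map_leaves c r hr]
    rfl
  rw [hsz, hr ⟨i, hi2⟩,
    show c.sizeUpTo i = c.sizeUpTo (⟨i, hi2⟩ : Fin c.length) from rfl,
    ofFn_drop_take c v ⟨i, hi2⟩]

theorem ncInv_tree (φ : NCSeries V V) :
    ∀ n, 0 < n → ∀ v : Fin n → V,
      ncInv φ n v = ∑ᶠ T ∈ {T : PTree | T.Good ∧ T.leaves = n},
        ((-1 : ℤ) ^ T.internalVertices) • applyTree φ T (List.ofFn v) := by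
  have hsm : ∀ (k : ℕ) (x : V), ((-1 : ℤ) ^ k) • x = ((-1 : ℂ) ^ k) • x := by
    intro k x
    rw [← Int.cast_smul_eq_zsmul ℂ]
    push_cast
    ring_nf
  intro n
  induction n using Nat.strong_induction_on with
  | _ n ih =>
  intro hn v
  rw [finsum_mem_eq_finite_toFinset_sum _ (finite_good n)]
  rw [Finset.sum_congr rfl (fun T _ => hsm T.internalVertices (applyTree φ T (List.ofFn v)))]
  match n, hn, ih, v with
  | 1, _, _, v =>
    have hset : (finite_good 1).toFinset = {PTree.leaf} := by
      ext T
      simp only [Set.Finite.mem_toFinset, Set.mem_setOf_eq, Finset.mem_singleton]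
      constructor
      · rintro ⟨hg, hl⟩; exact hg.eq_leaf_of_leaves_eq_one hl
      · rintro rfl; exact ⟨PTree.Good.leaf, rfl⟩
    rw [hset, Finset.sum_singleton, ncInv_one]
    rw [show PTree.leaf.internalVertices = 0 from rfl, pow_zero, one_smul]
    rw [show applyTree φ PTree.leaf (List.ofFn v) = ((List.ofFn v).head?).getD 0 from by
      rw [applyTree]]
    rw [List.ofFn_succ]
    rfl
  | (m+2), _, ih, v =>
    have key : ncInv φ (m+2) = - ∑ c : {c : Composition (m+2) // 1 < c.length},
        compAlongF φ c.1 fun j => ncInv φ (c.1.blocksFun j) := by rw [ncInv]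
    rw [key, MultilinearMap.neg_apply, MultilinearMap.sum_apply]
    have hstep : ∀ c : {c : Composition (m+2) // 1 < c.length},
        (compAlongF φ c.1 fun j => ncInv φ (c.1.blocksFun j)) v
          = ∑ r ∈ Fintype.piFinset
              (fun j : Fin c.1.length => (finite_good (c.1.blocksFun j)).toFinset),
              ((-1:ℂ) ^ (∑ j, (r j).internalVertices)) •
                φ c.1.length (fun j => applyTree φ (r j) (List.ofFn (v ∘ c.1.embedding j))) := by
      intro c
      have hin : (fun j => ncInv φ (c.1.blocksFun j) ((fun i => v i) ∘ c.1.embedding j))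
          = fun j => ∑ T ∈ (finite_good (c.1.blocksFun j)).toFinset,
              ((-1:ℂ) ^ T.internalVertices) • applyTree φ T (List.ofFn (v ∘ c.1.embedding j)) := by
        funext j
        rw [ih _ (blocksFun_lt c.1 c.2 j) (c.1.one_le_blocksFun j),
          finsum_mem_eq_finite_toFinset_sum _ (finite_good (c.1.blocksFun j))]
        exact Finset.sum_congr rfl fun T _ => hsm _ _
      rw [show (compAlongF φ c.1 fun j => ncInv φ (c.1.blocksFun j)) v
          = φ c.1.length (fun j => ncInv φ (c.1.blocksFun j) ((fun i => v i) ∘ c.1.embedding j))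
          from rfl, hin,
        MultilinearMap.map_sum_finset (φ c.1.length)
          (fun j T => ((-1:ℂ) ^ T.internalVertices) •
            applyTree φ T (List.ofFn (v ∘ c.1.embedding j)))]
      refine Finset.sum_congr rfl fun r _ => ?_
      rw [MultilinearMap.map_smul_univ (φ c.1.length)
          (fun j => ((-1:ℂ) ^ (r j).internalVertices))
          (fun j => applyTree φ (r j) (List.ofFn (v ∘ c.1.embedding j))),
        Finset.prod_pow_eq_pow_sum]
    rw [Finset.sum_congr rfl fun c _ => hstep c, ← Finset.sum_neg_distrib]
    have hterm : ∀ c : {c : Composition (m+2) // 1 < c.length},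
        (- ∑ r ∈ Fintype.piFinset
            (fun j : Fin c.1.length => (finite_good (c.1.blocksFun j)).toFinset),
            ((-1:ℂ) ^ (∑ j, (r j).internalVertices)) •
              φ c.1.length (fun j => applyTree φ (r j) (List.ofFn (v ∘ c.1.embedding j))))
          = ∑ r ∈ Fintype.piFinset
              (fun j : Fin c.1.length => (finite_good (c.1.blocksFun j)).toFinset),
              ((-1:ℂ) ^ (PTree.node (List.ofFn r)).internalVertices) •
                applyTree φ (PTree.node (List.ofFn r)) (List.ofFn v) := by
      intro c
      rw [← Finset.sum_neg_distrib]
      refine Finset.sum_congr rfl fun r hr => ?_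
      have hleaves : ∀ j, (r j).leaves = c.1.blocksFun j := fun j =>
        ((finite_good (c.1.blocksFun j)).mem_toFinset.1 (Fintype.mem_piFinset.1 hr j)).2
      rw [node_ofFn_apply φ c.1 r hleaves v, node_ofFn_iv r, pow_add, pow_one, neg_one_mul,
        neg_smul]
    rw [Finset.sum_congr rfl fun c _ => hterm c, Finset.sum_sigma']
    refine Finset.sum_bij (fun p _ => PTree.node (List.ofFn p.2)) ?_ ?_ ?_ ?_
    · -- maps into the good trees with m+2 leaves
      rintro ⟨c, r⟩ hp
      have hp2 := (Finset.mem_sigma.1 hp).2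
      have hleaves : ∀ j, (r j).leaves = c.1.blocksFun j := fun j =>
        ((finite_good (c.1.blocksFun j)).mem_toFinset.1 (Fintype.mem_piFinset.1 hp2 j)).2
      have hgood : ∀ j, (r j).Good := fun j =>
        ((finite_good (c.1.blocksFun j)).mem_toFinset.1 (Fintype.mem_piFinset.1 hp2 j)).1
      refine (finite_good (m+2)).mem_toFinset.2 ⟨?_, ?_⟩
      · refine PTree.Good.node _ (by rw [List.length_ofFn]; exact c.2) ?_
        intro t ht
        obtain ⟨j, rfl⟩ := (List.mem_ofFn ..).1 ht
        exact hgood j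
      · show PTree.leavesList (List.ofFn r) = m + 2
        rw [PTree.leavesList_eq_sum_map, ← blocks_eq_map_leaves c.1 r hleaves]
        exact c.1.blocks_sum
    · -- injectivity
      rintro ⟨⟨c, hc⟩, r⟩ hp ⟨⟨c', hc'⟩, r'⟩ hq heq
      have hp2 := (Finset.mem_sigma.1 hp).2
      have hq2 := (Finset.mem_sigma.1 hq).2
      have hleaves : ∀ j, (r j).leaves = c.blocksFun j := fun j =>
        ((finite_good (c.blocksFun j)).mem_toFinset.1 (Fintype.mem_piFinset.1 hp2 j)).2
      have hleaves' : ∀ j, (r' j).leaves = c'.blocksFun j := fun j =>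
        ((finite_good (c'.blocksFun j)).mem_toFinset.1 (Fintype.mem_piFinset.1 hq2 j)).2
      simp only [PTree.node.injEq] at heq
      have hcc : c = c' := by
        apply Composition.ext
        rw [blocks_eq_map_leaves c r hleaves, blocks_eq_map_leaves c' r' hleaves', heq]
      subst hcc
      have : r = r' := List.ofFn_inj.1 heq
      subst this
      rfl
    · -- surjectivity
      intro T hT
      obtain ⟨hg, hl⟩ := (finite_good (m+2)).mem_toFinset.1 hT
      cases hg with
      | leaf => simp [PTree.leaves] at hl
      | node ts hlen h =>
        have hpos : ∀ t ∈ ts, 1 ≤ t.leaves := fun t ht => (h t ht).one_le_leaves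
        have hsum : (ts.map PTree.leaves).sum = m + 2 :=
          (PTree.leavesList_eq_sum_map ts).symm.trans hl
        let c : Composition (m+2) :=
          ⟨ts.map PTree.leaves, fun {i} hi => by
            obtain ⟨t, ht, rfl⟩ := List.mem_map.1 hi; exact hpos t ht, hsum⟩
        have hclen : c.length = ts.length := List.length_map PTree.leaves
        have hc : 1 < c.length := by rw [hclen]; omega
        have hblocksFun : ∀ j : Fin c.length,
            c.blocksFun j = (ts[j.1]'(hclen ▸ j.2)).leaves := by
          intro j
          show c.blocks.get j = _
          simp only [List.get_eq_getElem]
          exact List.getElem_map ..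
        refine ⟨⟨⟨c, hc⟩, fun j => ts[j.1]'(hclen ▸ j.2)⟩, ?_, ?_⟩
        · refine Finset.mem_sigma.2 ⟨Finset.mem_univ _, Fintype.mem_piFinset.2 fun j => ?_⟩
          refine (finite_good (c.blocksFun j)).mem_toFinset.2 ⟨?_, ?_⟩
          · exact h _ (List.getElem_mem _)
          · exact (hblocksFun j).symm
        · show PTree.node (List.ofFn _) = PTree.node ts
          congr 1
          apply List.ext_getElem
          · rw [List.length_ofFn, hclen]
          · intro i h1 h2
            rw [List.getElem_ofFn]
    · -- values agree
      rintro ⟨c, r⟩ _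
      rfl

end Trees2


/-- a non-commutative power series `φ : V → V` with `φ₁ = id` is invertible;
its inverse satisfies `(φ⁻¹)₁ = id` and, for `n > 1`,
`(φ⁻¹)_n(v₁,…,v_n) = Σ_T (-1)^{|V(T)|} φ_T(v₁,…,v_n)`, summing over the plane rooted
trees `T` with `n` leaves all of whose internal vertices have at least two children. -/
theorem stmt19 {V : Type*} [AddCommGroup V] [Module ℂ V] (φ : NCSeries V V)
    (hφ1 : ∀ v : Fin 1 → V, φ 1 v = v 0) :
    (∃ ψ : NCSeries V V, NCInverse φ ψ) ∧
    ∀ ψ : NCSeries V V, NCInverse φ ψ →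
      (∀ v : Fin 1 → V, ψ 1 v = v 0) ∧
      ∀ n : ℕ, 1 < n → ∀ v : Fin n → V,
        ψ n v = ∑ᶠ T ∈ {T : PTree | PTree.Good T ∧ T.leaves = n},
          ((-1 : ℤ) ^ T.internalVertices) • applyTree φ T (List.ofFn v) := by
  constructor
  · exact ⟨ncInv φ, ncInv_inverse φ hφ1⟩
  · intro ψ hψ
    have huniq := inverse_unique φ ψ hφ1 hψ
    constructor
    · intro v
      rw [huniq 1 Nat.one_pos v, ncInv_one]
    · intro n hn v
      rw [huniq n (by omega) v, ncInv_tree φ n (by omega) v]
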